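/- Let p be an odd prime, R = 𝔽_p[π] the polynomial ring in one variable π over 𝔽_p, and m an even integer with m ≥ 4. In the free Lie algebra over R on generators ξ₁,…,ξ_m, the sequence ρ₁ = π·ξ₁ + [ξ₁,ξ₂], ρ₂ = π·ξ₂ + [ξ₂,ξ₃], …, ρ_{m−1} = π·ξ_{m−1} + [ξ_{m−1},ξ_m], ρ_m = π·ξ_m + [ξ_m,ξ₁] is strongly free (over R). These are the initial forms of the pro-p relators x₁^p[x₁,x₂], x₂^p[x₂,x₃], …, x_{m−1}^p[x_{m−1},x_m], x_m^p[x_m,x₁]. -/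

import Mathlib

open LieSubmodule

section StronglyFree

variable (K : Type*) [CommRing K] (L : Type*) [LieRing L] [LieAlgebra K L]

attribute [local instance 100] LieRing.ofAssociativeRing

/-- The derived ideal `[I, I]` of a Lie ideal `I`, viewed as a Lie submodule (for the
ambient `L`-action) of `I`. -/
def derivedLieSubmodule (I : LieIdeal K L) : LieSubmodule K L I :=
  lieSpan K L {z : I | ∃ x y : I, (z : L) = ⁅(x : L), (y : L)⁆}

/-- The abelianization `I/[I,I]` of a Lie ideal `I`. -/
abbrev LieIdealAb (I : LieIdeal K L) : Type _ := I ⧸ derivedLieSubmodule K L I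

theorem lie_mk_eq_zero (I : LieIdeal K L) {x : L} (hx : x ∈ I) (m : I) :
    ⁅x, (LieSubmodule.Quotient.mk (N := derivedLieSubmodule K L I) m)⁆ = 0 := by
  have : ⁅x, (LieSubmodule.Quotient.mk (N := derivedLieSubmodule K L I) m)⁆
      = LieSubmodule.Quotient.mk (N := derivedLieSubmodule K L I) ⁅x, m⁆ := rfl
  rw [this, LieSubmodule.Quotient.mk_eq_zero']
  exact subset_lieSpan ⟨⟨x, hx⟩, m, rfl⟩

/-- The action of the quotient Lie algebra `L ⧸ I` on the abelianization `I/[I,I]`. -/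
noncomputable def abelianizationAction (I : LieIdeal K L) :
    (L ⧸ I) →ₗ⁅K⁆ Module.End K (LieIdealAb K L I) :=
  { (Submodule.liftQ I.toSubmodule
      (LieModule.toEnd K L (LieIdealAb K L I)).toLinearMap (by
        intro x hx
        ext m
        induction m using Quotient.inductionOn' with
        | h m =>
          exact lie_mk_eq_zero K L I hx m)) with
    map_lie' := by
      intro x y
      induction x using Quotient.inductionOn' with
      | h x =>
      induction y using Quotient.inductionOn' with
      | h y =>
        have hx : (Quotient.mk'' x : L ⧸ I) = LieSubmodule.Quotient.mk (N := I) x := rfl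
        have hy : (Quotient.mk'' y : L ⧸ I) = LieSubmodule.Quotient.mk (N := I) y := rfl
        simp only [hx, hy, ← LieSubmodule.Quotient.mk_bracket]
        change (LieModule.toEnd K L (LieIdealAb K L I)) ⁅x, y⁆
          = ⁅(LieModule.toEnd K L (LieIdealAb K L I)) x,
              (LieModule.toEnd K L (LieIdealAb K L I)) y⁆
        exact LieHom.map_lie _ x y }

/-- `I/[I,I]` as a module over the universal enveloping algebra of `L ⧸ I`. -/
noncomputable instance lieIdealAbModule (I : LieIdeal K L) :
    Module (UniversalEnvelopingAlgebra K (L ⧸ I)) (LieIdealAb K L I) :=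
  Module.compHom (LieIdealAb K L I)
    (UniversalEnvelopingAlgebra.lift K (abelianizationAction K L I) :
      UniversalEnvelopingAlgebra K (L ⧸ I) →ₐ[K]
        Module.End K (LieIdealAb K L I)).toRingHom

/-- A family `ρ` of elements of a Lie algebra `L` over `K` is *strongly free* if,
denoting by `𝔯` the Lie ideal generated by the `ρ i`, by `𝔤 = L ⧸ 𝔯` and by `U𝔤` the
universal enveloping algebra of `𝔤`, the `K`-module `U𝔤` is torsion free and the
abelianization `𝔯/[𝔯,𝔯]` is a free `U𝔤`-module with basis the images of the `ρ i`. -/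
def IsStronglyFree {ι : Type*} (ρ : ι → L) : Prop :=
  Submodule.torsion K (UniversalEnvelopingAlgebra K (L ⧸ lieSpan K L (Set.range ρ))) = ⊥ ∧
  ∃ b : Module.Basis ι (UniversalEnvelopingAlgebra K (L ⧸ lieSpan K L (Set.range ρ)))
      (LieIdealAb K L (lieSpan K L (Set.range ρ))),
    ∀ i, b i = LieSubmodule.Quotient.mk
      (⟨ρ i, subset_lieSpan (Set.mem_range_self i)⟩ : lieSpan K L (Set.range ρ))

end StronglyFree

namespace Circuit

attribute [local instance 100] LieRing.ofAssociativeRing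


variable {m : ℕ}

theorem succ_mod_eq (a m : ℕ) (ha : a < m) :
    (a + 1) % m = if a + 1 = m then 0 else a + 1 := by
  split
  · next h => rw [h, Nat.mod_self]
  · exact Nat.mod_eq_of_lt (by omega)

theorem rot_val (hm2 : 2 ≤ m) (k : Fin m) : (finRotate m k).val = (k.val + 1) % m := by
  cases m with
  | zero => omega
  | succ n =>
    rw [finRotate_succ_apply, Fin.add_def]
    have h1 : (1 : Fin (n+1)).val = 1 % (n+1) := rfl
    have h2 : 1 % (n+1) = 1 := Nat.mod_eq_of_lt (by omega)
    simp only [h1, h2]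

theorem rot_parity (hm2 : 2 ≤ m) (he : Even m) (k : Fin m) :
    (finRotate m k).val % 2 = (k.val + 1) % 2 := by
  rw [rot_val hm2, Nat.mod_mod_of_dvd _ he.two_dvd]

theorem rot_ne (hm2 : 2 ≤ m) (k : Fin m) : finRotate m k ≠ k := by
  intro h
  have h1 := congrArg Fin.val h
  rw [rot_val hm2, succ_mod_eq _ _ k.isLt] at h1
  split at h1 <;> omega

theorem rot_rot_ne (hm4 : 4 ≤ m) (k : Fin m) : finRotate m (finRotate m k) ≠ k := by
  intro h
  have h1 := congrArg Fin.val h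
  have hr := rot_val (by omega : 2 ≤ m) k
  rw [rot_val (by omega), hr, succ_mod_eq _ _ k.isLt] at h1
  have hk := k.isLt
  split at h1
  · rw [Nat.mod_eq_of_lt (by omega)] at h1; omega
  · rw [succ_mod_eq _ _ (by omega)] at h1
    split at h1 <;> omega

open MonoidAlgebra FreeMonoid

variable (p : ℕ)

/-- The free associative algebra on `Fin m` over `𝔽_p[π]`, as a monoid algebra. -/
abbrev TT (p m : ℕ) := MonoidAlgebra (Polynomial (ZMod p)) (FreeMonoid (Fin m))

/-- The generators. -/
noncomputable def xg (j : Fin m) : TT p m := single (of j) 1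

theorem xg_mul_single (j : Fin m) (w : FreeMonoid (Fin m)) (c : Polynomial (ZMod p)) :
    xg p j * single w c = single (of j * w) c := by
  rw [xg, single_mul_single, one_mul]

theorem single_mul_xg (j : Fin m) (w : FreeMonoid (Fin m)) (c : Polynomial (ZMod p)) :
    single w c * xg p j = single (w * of j) c := by
  rw [xg, single_mul_single, mul_one]

/-- The recursively defined left-multiplication action of a generator on normal forms. -/
noncomputable def act (j : Fin m) : List (Fin m) → TT p m
  | [] => xg p j
  | b :: v =>
    if j.val % 2 = 1 ∧ b = finRotate m j then
      xg p b * act j v - (Polynomial.X : Polynomial (ZMod p)) • act j v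
    else if j.val % 2 = 1 ∧ j = finRotate m b then
      xg p b * act j v + (Polynomial.X : Polynomial (ZMod p)) • (single (ofList (b :: v)) 1 : TT p m)
    else (single (ofList (j :: b :: v)) 1 : TT p m)

theorem act_nil (j : Fin m) : act p j [] = xg p j := rfl

theorem act_cons (j b : Fin m) (v : List (Fin m)) :
    act p j (b :: v) =
      if j.val % 2 = 1 ∧ b = finRotate m j then
        xg p b * act p j v - (Polynomial.X : Polynomial (ZMod p)) • act p j v
      else if j.val % 2 = 1 ∧ j = finRotate m b then
        xg p b * act p j v +
          (Polynomial.X : Polynomial (ZMod p)) • (single (ofList (b :: v)) 1 : TT p m)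
      else (single (ofList (j :: b :: v)) 1 : TT p m) := rfl

theorem single_eq_smul (w : FreeMonoid (Fin m)) (c : Polynomial (ZMod p)) :
    (single w c : TT p m) = c • single w 1 := by
  rw [smul_single', mul_one]

theorem fs_single (w : FreeMonoid (Fin m)) (c : Polynomial (ZMod p)) :
    (ofCoeff (Finsupp.single w c) : TT p m) = single w c := rfl

theorem act_even {j : Fin m} (hj : j.val % 2 = 0) (l : List (Fin m)) :
    act p j l = single (ofList (j :: l)) 1 := by
  cases l with
  | nil => rfl
  | cons b v =>
    rw [act_cons, if_neg (by rintro ⟨h, -⟩; omega), if_neg (by rintro ⟨h, -⟩; omega)]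

/-- The generator action as an endomorphism. -/
noncomputable def Eop (j : Fin m) : Module.End (Polynomial (ZMod p)) (TT p m) :=
  Finsupp.linearCombination _ (fun w : FreeMonoid (Fin m) => act p j w.toList) ∘ₗ
    (MonoidAlgebra.coeffLinearEquiv _).toLinearMap

theorem Eop_single (j : Fin m) (w : FreeMonoid (Fin m)) (c : Polynomial (ZMod p)) :
    Eop p j (single w c) = c • act p j w.toList :=
  Finsupp.linearCombination_single _ _ _

theorem Eop_even {j : Fin m} (hj : j.val % 2 = 0) (g : TT p m) :
    Eop p j g = xg p j * g := by
  induction g using MonoidAlgebra.induction_linear with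
  | zero => rw [map_zero, mul_zero]
  | add f g hf hg => rw [map_add, hf, hg, mul_add]
  | single w c =>
    rw [Eop_single, act_even p hj, xg_mul_single]
    exact (single_eq_smul p (of j * w) c).symm

/-- The operator form of the relation `ρ_k`. -/
theorem rel_op (hm4 : 4 ≤ m) (he : Even m) (k : Fin m) :
    (Polynomial.X : Polynomial (ZMod p)) • Eop p k + Eop p k * Eop p (finRotate m k) -
      Eop p (finRotate m k) * Eop p k = 0 := by
  have hm2 : 2 ≤ m := by omega
  apply LinearMap.ext
  intro g
  show (Polynomial.X : Polynomial (ZMod p)) • Eop p k g + Eop p k (Eop p (finRotate m k) g)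
      - Eop p (finRotate m k) (Eop p k g) = 0
  induction g using MonoidAlgebra.induction_linear with
  | zero => simp only [map_zero, smul_zero, add_zero, sub_zero]
  | add f g hf hg =>
    have h := congrArg₂ HAdd.hAdd hf hg
    rw [add_zero] at h
    rw [← h]
    simp only [map_add, smul_add]
    abel
  | single w c =>
    rcases Nat.even_or_odd k.val with hk | hk
    · -- k even, σ k odd
      have hk0 : k.val % 2 = 0 := Nat.even_iff.mp hk
      have hσ : (finRotate m k).val % 2 = 1 := by rw [rot_parity hm2 he]; omega
      rw [Eop_even p hk0, Eop_single, Eop_even p hk0, xg_mul_single, Eop_single]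
      have h1 : (of k * w).toList = k :: w.toList := rfl
      rw [h1, act_cons,
        if_neg (by rintro ⟨-, h⟩; exact rot_rot_ne hm4 k h.symm), if_pos ⟨hσ, rfl⟩]
      have h2 : ofList (k :: w.toList) = of k * w := rfl
      rw [h2, single_eq_smul, mul_smul_comm]
      module
    · -- k odd, σ k even
      have hk1 : k.val % 2 = 1 := Nat.odd_iff.mp hk
      have hσ : (finRotate m k).val % 2 = 0 := by rw [rot_parity hm2 he]; omega
      rw [Eop_even p hσ, Eop_single, Eop_even p hσ, xg_mul_single, Eop_single]
      have h1 : (of (finRotate m k) * w).toList = finRotate m k :: w.toList := rfl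
      rw [h1, act_cons, if_pos ⟨hk1, rfl⟩, mul_smul_comm]
      module


/-- The representation of the free algebra on the normal-form module. -/
noncomputable def Phi : TT p m →ₐ[Polynomial (ZMod p)] Module.End (Polynomial (ZMod p)) (TT p m) :=
  MonoidAlgebra.lift _ _ _ (FreeMonoid.lift (Eop p))

theorem Phi_single (w : FreeMonoid (Fin m)) (c : Polynomial (ZMod p)) :
    Phi p (single w c) = c • FreeMonoid.lift (Eop p) w :=
  MonoidAlgebra.lift_single _ _ _

theorem Phi_xg (j : Fin m) : Phi p (xg p j) = Eop p j := by
  rw [xg, Phi_single, FreeMonoid.lift_eval_of, one_smul]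

theorem act_concat (hm2 : 2 ≤ m) (he : Even m) {j : Fin m} (hj : j.val % 2 = 1)
    (a : Fin m) (l : List (Fin m)) :
    act p a (l ++ [j]) = act p a l * xg p j := by
  induction l with
  | nil =>
    show act p a [j] = xg p a * xg p j
    rw [act_cons]
    rw [if_neg, if_neg]
    · rw [xg, xg, single_mul_single, one_mul]
      rfl
    · rintro ⟨ha, hb⟩
      have := rot_parity hm2 he j
      have hb' := congrArg Fin.val hb
      omega
    · rintro ⟨ha, hb⟩
      have := rot_parity hm2 he a
      have hb' := congrArg Fin.val hb
      omega
  | cons b v ih =>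
    show act p a (b :: (v ++ [j])) = act p a (b :: v) * xg p j
    rw [act_cons, act_cons]
    split_ifs with h1 h2
    · rw [ih, sub_mul, mul_assoc, smul_mul_assoc]
    · rw [ih, add_mul, mul_assoc, smul_mul_assoc]
      congr 1
      congr 1
      exact (single_mul_xg p j (ofList (b :: v)) 1).symm
    · exact (single_mul_xg p j (ofList (a :: b :: v)) 1).symm

theorem Eop_concat (hm2 : 2 ≤ m) (he : Even m) {j : Fin m} (hj : j.val % 2 = 1)
    (a : Fin m) (g : TT p m) :
    Eop p a (g * xg p j) = Eop p a g * xg p j := by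
  induction g using MonoidAlgebra.induction_linear with
  | zero => rw [zero_mul, map_zero, zero_mul]
  | add f g hf hg => rw [add_mul, map_add, map_add, add_mul, hf, hg]
  | single w c =>
    rw [single_mul_xg, Eop_single, Eop_single, smul_mul_assoc]
    have h1 : (w * of j).toList = w.toList ++ [j] := rfl
    rw [h1, act_concat p hm2 he hj]

theorem lift_word_concat (hm2 : 2 ≤ m) (he : Even m) {j : Fin m} (hj : j.val % 2 = 1)
    (l : List (Fin m)) (g : TT p m) :
    FreeMonoid.lift (Eop p) (ofList l) (g * xg p j)
      = FreeMonoid.lift (Eop p) (ofList l) g * xg p j := by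
  induction l generalizing g with
  | nil =>
    show FreeMonoid.lift (Eop p) 1 _ = FreeMonoid.lift (Eop p) 1 _ * _
    rw [map_one, Module.End.one_apply, Module.End.one_apply]
  | cons a l ih =>
    show FreeMonoid.lift (Eop p) (of a * ofList l) (g * xg p j)
        = FreeMonoid.lift (Eop p) (of a * ofList l) g * xg p j
    rw [map_mul (FreeMonoid.lift (Eop p)) (of a) (ofList l), Module.End.mul_apply,
      Module.End.mul_apply, ih, FreeMonoid.lift_eval_of, Eop_concat p hm2 he hj]

theorem Phi_rightmul (hm2 : 2 ≤ m) (he : Even m) {j : Fin m} (hj : j.val % 2 = 1)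
    (t g : TT p m) :
    Phi p t (g * xg p j) = Phi p t g * xg p j := by
  induction t using MonoidAlgebra.induction_linear with
  | zero => rw [map_zero, LinearMap.zero_apply, LinearMap.zero_apply, zero_mul]
  | add f g' hf hg => rw [map_add, LinearMap.add_apply, LinearMap.add_apply, add_mul, hf, hg]
  | single w c =>
    rw [Phi_single, LinearMap.smul_apply, LinearMap.smul_apply, smul_mul_assoc]
    congr 1
    exact lift_word_concat p hm2 he hj w.toList g

/-- The associative versions of the relators. -/
noncomputable def fel (k : Fin m) : TT p m :=
  (Polynomial.X : Polynomial (ZMod p)) • xg p k + xg p k * xg p (finRotate m k)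
    - xg p (finRotate m k) * xg p k

/-- The two-sided ideal generated by the relators, as a submodule. -/
noncomputable def II (p m : ℕ) : Submodule (Polynomial (ZMod p)) (TT p m) :=
  Submodule.span _ {t | ∃ a b k, t = a * fel p k * b}

theorem fel_mul_mem (k : Fin m) (u : TT p m) : fel p k * u ∈ II p m :=
  Submodule.subset_span ⟨1, u, k, by rw [one_mul]⟩

theorem fel_mem (k : Fin m) : fel p k ∈ II p m := by
  simpa using fel_mul_mem p k 1

theorem II_mul_left (u : TT p m) {t : TT p m} (h : t ∈ II p m) : u * t ∈ II p m := by
  induction h using Submodule.span_induction with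
  | mem t ht => obtain ⟨a, b, k, rfl⟩ := ht
                exact Submodule.subset_span ⟨u * a, b, k, by noncomm_ring⟩
  | zero => rw [mul_zero]; exact zero_mem _
  | add x y _ _ hx hy => rw [mul_add]; exact add_mem hx hy
  | smul c x _ hx => rw [mul_smul_comm]; exact Submodule.smul_mem _ _ hx

theorem II_mul_right (u : TT p m) {t : TT p m} (h : t ∈ II p m) : t * u ∈ II p m := by
  induction h using Submodule.span_induction with
  | mem t ht => obtain ⟨a, b, k, rfl⟩ := ht
                exact Submodule.subset_span ⟨a, b * u, k, by noncomm_ring⟩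
  | zero => rw [zero_mul]; exact zero_mem _
  | add x y _ _ hx hy => rw [add_mul]; exact add_mem hx hy
  | smul c x _ hx => rw [smul_mul_assoc]; exact Submodule.smul_mem _ _ hx

theorem Phi_fel (hm4 : 4 ≤ m) (he : Even m) (k : Fin m) : Phi p (fel p k) = 0 := by
  rw [fel, map_sub, map_add, map_smul, map_mul, map_mul, Phi_xg, Phi_xg]
  exact rel_op p hm4 he k

theorem Phi_zero_of_mem (hm4 : 4 ≤ m) (he : Even m) {t : TT p m} (h : t ∈ II p m) :
    Phi p t = 0 := by
  induction h using Submodule.span_induction with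
  | mem t ht => obtain ⟨a, b, k, rfl⟩ := ht
                rw [map_mul, map_mul, Phi_fel p hm4 he, mul_zero, zero_mul]
  | zero => rw [map_zero]
  | add x y _ _ hx hy => rw [map_add, hx, hy, add_zero]
  | smul c x _ hx => rw [map_smul, hx, smul_zero]

theorem xmul_sub_act_mem (a : Fin m) (l : List (Fin m)) :
    xg p a * single (ofList l) 1 - act p a l ∈ II p m := by
  induction l with
  | nil =>
    have h1 : (single (ofList ([] : List (Fin m))) 1 : TT p m) = 1 := rfl
    rw [h1, mul_one, act_nil, sub_self]
    exact zero_mem _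
  | cons b v ih =>
    have hsv : (single (ofList (b :: v)) 1 : TT p m) = xg p b * single (ofList v) 1 :=
      (xg_mul_single p b (ofList v) 1).symm
    rw [act_cons]
    split_ifs with h1 h2
    · obtain ⟨ha, hb⟩ := h1
      subst hb
      have key : xg p a * xg p (finRotate m a)
          = xg p (finRotate m a) * xg p a
            - (Polynomial.X : Polynomial (ZMod p)) • xg p a + fel p a := by
        rw [fel]; abel
      have hid : xg p a * single (ofList (finRotate m a :: v)) 1
            - (xg p (finRotate m a) * act p a v
              - (Polynomial.X : Polynomial (ZMod p)) • act p a v)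
          = xg p (finRotate m a) * (xg p a * single (ofList v) 1 - act p a v)
            - (Polynomial.X : Polynomial (ZMod p)) • (xg p a * single (ofList v) 1 - act p a v)
            + fel p a * single (ofList v) 1 := by
        rw [hsv, ← mul_assoc, key]
        simp only [mul_sub, sub_mul, add_mul, mul_add, smul_mul_assoc, smul_sub, mul_assoc]
        abel
      rw [hid]
      exact add_mem (sub_mem (II_mul_left p _ ih) (Submodule.smul_mem _ _ ih)) (fel_mul_mem p _ _)
    · obtain ⟨ha, hb⟩ := h2
      have key : xg p a * xg p b
          = (Polynomial.X : Polynomial (ZMod p)) • xg p b + xg p b * xg p a - fel p b := by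
        rw [fel, ← hb]; abel
      have hid : xg p a * single (ofList (b :: v)) 1
            - (xg p b * act p a v
              + (Polynomial.X : Polynomial (ZMod p)) • single (ofList (b :: v)) 1)
          = xg p b * (xg p a * single (ofList v) 1 - act p a v)
            - fel p b * single (ofList v) 1 := by
        rw [hsv, ← mul_assoc, key]
        simp only [mul_sub, sub_mul, add_mul, mul_add, smul_mul_assoc, smul_sub, mul_assoc]
        abel
      rw [hid]
      exact sub_mem (II_mul_left p _ ih) (fel_mul_mem p _ _)
    · have h3 : xg p a * single (ofList (b :: v)) 1 = single (ofList (a :: b :: v)) 1 :=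
        xg_mul_single p a (ofList (b :: v)) 1
      rw [h3, sub_self]
      exact zero_mem _

theorem xmul_sub_Eop_mem (a : Fin m) (h : TT p m) :
    xg p a * h - Eop p a h ∈ II p m := by
  induction h using MonoidAlgebra.induction_linear with
  | zero => rw [mul_zero, map_zero, sub_self]; exact zero_mem _
  | add f g hf hg =>
    rw [map_add, mul_add, add_sub_add_comm]
    exact add_mem hf hg
  | single w c =>
    rw [Eop_single, single_eq_smul, mul_smul_comm, ← smul_sub]
    exact Submodule.smul_mem _ _ (xmul_sub_act_mem p a w.toList)

theorem word_mul_sub_lift_mem (l : List (Fin m)) (g : TT p m) :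
    single (ofList l) 1 * g - FreeMonoid.lift (Eop p) (ofList l) g ∈ II p m := by
  induction l generalizing g with
  | nil =>
    have h1 : (single (ofList ([] : List (Fin m))) 1 : TT p m) = 1 := rfl
    rw [h1, one_mul]
    show g - FreeMonoid.lift (Eop p) 1 g ∈ II p m
    rw [map_one, Module.End.one_apply, sub_self]
    exact zero_mem _
  | cons a l ih =>
    have h1 : (single (ofList (a :: l)) 1 : TT p m) = xg p a * single (ofList l) 1 :=
      (xg_mul_single p a (ofList l) 1).symm
    have h2 : FreeMonoid.lift (Eop p) (ofList (a :: l)) g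
        = Eop p a (FreeMonoid.lift (Eop p) (ofList l) g) := by
      show FreeMonoid.lift (Eop p) (of a * ofList l) g = _
      rw [map_mul (FreeMonoid.lift (Eop p)) (of a) (ofList l), FreeMonoid.lift_eval_of,
        Module.End.mul_apply]
    have hid : single (ofList (a :: l)) 1 * g - FreeMonoid.lift (Eop p) (ofList (a :: l)) g
        = xg p a * (single (ofList l) 1 * g - FreeMonoid.lift (Eop p) (ofList l) g)
          + (xg p a * (FreeMonoid.lift (Eop p) (ofList l) g)
            - Eop p a (FreeMonoid.lift (Eop p) (ofList l) g)) := by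
      rw [h1, h2, mul_sub, mul_assoc]; abel
    rw [hid]
    exact add_mem (II_mul_left p _ (ih g)) (xmul_sub_Eop_mem p a _)

theorem mul_sub_phi_mem (t g : TT p m) : t * g - Phi p t g ∈ II p m := by
  induction t using MonoidAlgebra.induction_linear with
  | zero => rw [zero_mul, map_zero, LinearMap.zero_apply, sub_self]; exact zero_mem _
  | add f f' hf hf' =>
    rw [map_add, add_mul, LinearMap.add_apply, add_sub_add_comm]
    exact add_mem hf hf'
  | single w c =>
    rw [Phi_single, single_eq_smul, smul_mul_assoc, LinearMap.smul_apply,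
      ← smul_sub]
    exact Submodule.smul_mem _ _ (word_mul_sub_lift_mem p w.toList g)

theorem sub_nu_mem (t : TT p m) : t - Phi p t 1 ∈ II p m := by
  have := mul_sub_phi_mem p t 1
  rwa [mul_one] at this

theorem mem_of_nu_zero {t : TT p m} (h : Phi p t 1 = 0) : t ∈ II p m := by
  have := sub_nu_mem p t
  rwa [h, sub_zero] at this

theorem coeff_mul_xg (g : TT p m) (j : Fin m) (w : FreeMonoid (Fin m)) :
    (g * xg p j).coeff (w * of j) = g.coeff w := by
  rw [xg]
  rw [MonoidAlgebra.coeff_mul_single_eq_coeff_mul (x := g) w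
    (fun a _ => ⟨fun h => mul_right_cancel h, fun h => by rw [h]⟩), mul_one]

theorem coeff_mul_xg_ne (g : TT p m) {j : Fin m} {w : FreeMonoid (Fin m)}
    (hw : ∀ d, w ≠ d * of j) : (g * xg p j).coeff w = 0 :=
  MonoidAlgebra.mul_single_apply_of_not_exists_mul _ _ (by rintro ⟨d, hd⟩; exact hw d hd)

theorem descent {N : TT p m} {j : Fin m}
    (h : ∀ w : FreeMonoid (Fin m), N.coeff w = Polynomial.X * N.coeff (w * of j)) : N = 0 := by
  by_contra hN
  have hs : N.coeff.support.Nonempty :=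
    Finsupp.support_nonempty_iff.mpr (fun h0 => hN (MonoidAlgebra.coeff_eq_zero.mp h0))
  obtain ⟨v, hv, hmax⟩ := N.coeff.support.exists_mem_eq_sup hs (fun w => w.toList.length)
  have h1 : N.coeff v ≠ 0 := Finsupp.mem_support_iff.mp hv
  have h2 : N.coeff (v * of j) ≠ 0 := by
    intro h0
    rw [h v, h0, mul_zero] at h1
    exact h1 rfl
  have h3 := Finset.le_sup (f := fun w : FreeMonoid (Fin m) => w.toList.length)
    (Finsupp.mem_support_iff.mpr h2)
  rw [hmax] at h3
  have h5 : (v * of j).toList.length ≤ v.toList.length := h3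
  have h4 : (v * of j).toList.length = v.toList.length + 1 := by
    show (v.toList ++ [j]).length = v.toList.length + 1
    simp
  omega


section Bridge

variable {m : ℕ} (p : ℕ)
variable (ρ : Fin m → FreeLieAlgebra (Polynomial (ZMod p)) (Fin m))

local notation "KK" => Polynomial (ZMod p)
local notation "LL" => FreeLieAlgebra (Polynomial (ZMod p)) (Fin m)

/-- The relator ideal. -/
noncomputable abbrev RI : LieIdeal (Polynomial (ZMod p)) (FreeLieAlgebra (Polynomial (ZMod p)) (Fin m)) :=
  LieSubmodule.lieSpan (Polynomial (ZMod p)) (FreeLieAlgebra (Polynomial (ZMod p)) (Fin m))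
    (Set.range ρ)

/-- The quotient Lie algebra. -/
abbrev GA := FreeLieAlgebra (Polynomial (ZMod p)) (Fin m) ⧸ RI p ρ

/-- Its universal enveloping algebra. -/
abbrev UA := UniversalEnvelopingAlgebra (Polynomial (ZMod p)) (GA p ρ)

/-- The canonical map to the free associative algebra. -/
noncomputable def lam : LL →ₗ⁅KK⁆ TT p m := FreeLieAlgebra.lift _ (xg p)

theorem lam_of (j : Fin m) : lam p (FreeLieAlgebra.of KK j) = xg p j :=
  FreeLieAlgebra.lift_of_apply _ _

/-- The quotient map as a Lie algebra morphism. -/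
noncomputable def mkLie : LL →ₗ⁅KK⁆ GA p ρ :=
  { (RI p ρ).toSubmodule.mkQ with map_lie' := rfl }

theorem mkLie_apply (z : LL) :
    mkLie p ρ z = LieSubmodule.Quotient.mk (N := RI p ρ) z := rfl

/-- The projection from the free associative algebra onto the enveloping algebra. -/
noncomputable def piT : TT p m →ₐ[KK] UA p ρ :=
  MonoidAlgebra.lift _ _ _ (FreeMonoid.lift
    (fun j => UniversalEnvelopingAlgebra.ι KK (mkLie p ρ (FreeLieAlgebra.of KK j))))

theorem piT_xg (j : Fin m) :
    piT p ρ (xg p j)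
      = UniversalEnvelopingAlgebra.ι KK (mkLie p ρ (FreeLieAlgebra.of KK j)) := by
  rw [xg, piT, MonoidAlgebra.lift_single, FreeMonoid.lift_eval_of, one_smul]

/-- Extensionality for algebra maps out of `TT`. -/
theorem TT_algHom_ext {B : Type*} [Semiring B] [Algebra (Polynomial (ZMod p)) B]
    {φ ψ : TT p m →ₐ[KK] B} (h : ∀ j, φ (xg p j) = ψ (xg p j)) : φ = ψ := by
  refine MonoidAlgebra.algHom_ext ?_ (Subsingleton.elim _ _)
  intro w
  suffices h2 : ∀ l : List (Fin m), φ (single (ofList l) 1) = ψ (single (ofList l) 1) by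
    exact h2 w.toList
  intro l
  induction l with
  | nil =>
    have h1 : (single (ofList ([] : List (Fin m))) 1 : TT p m) = 1 := rfl
    rw [h1, map_one, map_one]
  | cons a l ih =>
    have h1 : (single (ofList (a :: l)) 1 : TT p m) = xg p a * single (ofList l) 1 :=
      (xg_mul_single p a (ofList l) 1).symm
    rw [h1, map_mul, map_mul, ih, h]

theorem lam_rho (hρ : ∀ k, ρ k =
      (Polynomial.X : Polynomial (ZMod p)) • FreeLieAlgebra.of KK k
      + ⁅FreeLieAlgebra.of KK k, FreeLieAlgebra.of KK (finRotate m k)⁆) (k : Fin m) :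
    lam p (ρ k) = fel p k := by
  rw [hρ k, map_add, map_smul, LieHom.map_lie, lam_of, lam_of, Ring.lie_def,
    fel]
  abel

theorem lam_mem_II (hρ : ∀ k, ρ k =
      (Polynomial.X : Polynomial (ZMod p)) • FreeLieAlgebra.of KK k
      + ⁅FreeLieAlgebra.of KK k, FreeLieAlgebra.of KK (finRotate m k)⁆)
    {z : LL} (hz : z ∈ RI p ρ) : lam p z ∈ II p m := by
  let NN : LieSubmodule KK LL LL :=
    { Submodule.comap (lam p).toLinearMap (II p m) with
      lie_mem := by
        intro x y hy
        show lam p ⁅x, y⁆ ∈ II p m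
        rw [LieHom.map_lie, Ring.lie_def]
        exact sub_mem (II_mul_left p _ hy) (II_mul_right p _ hy) }
  have hle : RI p ρ ≤ NN := by
    rw [LieSubmodule.lieSpan_le]
    rintro _ ⟨k, rfl⟩
    show lam p (ρ k) ∈ II p m
    rw [lam_rho p ρ hρ]
    exact fel_mem p k
  exact hle hz

/-- The compatibility `piT ∘ lam = ι ∘ mk`. -/
theorem piT_lam (z : LL) :
    piT p ρ (lam p z) = UniversalEnvelopingAlgebra.ι KK (mkLie p ρ z) := by
  have h : ((piT p ρ).toLieHom.comp (lam p))
      = (UniversalEnvelopingAlgebra.ι KK).comp (mkLie p ρ) := by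
    apply FreeLieAlgebra.hom_ext
    intro j
    show piT p ρ (lam p (FreeLieAlgebra.of KK j)) = _
    rw [lam_of, piT_xg]
    rfl
  exact DFunLike.congr_fun h z

theorem piT_lam_zero (hρ : ∀ k, ρ k =
      (Polynomial.X : Polynomial (ZMod p)) • FreeLieAlgebra.of KK k
      + ⁅FreeLieAlgebra.of KK k, FreeLieAlgebra.of KK (finRotate m k)⁆)
    {z : LL} (hz : z ∈ RI p ρ) : piT p ρ (lam p z) = 0 := by
  rw [piT_lam, mkLie_apply, LieSubmodule.Quotient.mk_eq_zero'.mpr hz, map_zero]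

/-- The representation of the enveloping algebra on normal forms. -/
noncomputable def zeta0 (hm4 : 4 ≤ m) (he : Even m)
    (hρ : ∀ k, ρ k =
      (Polynomial.X : Polynomial (ZMod p)) • FreeLieAlgebra.of KK k
      + ⁅FreeLieAlgebra.of KK k, FreeLieAlgebra.of KK (finRotate m k)⁆) :
    GA p ρ →ₗ⁅KK⁆ Module.End KK (TT p m) :=
  { (Submodule.liftQ (RI p ρ).toSubmodule ((Phi p).toLieHom.comp (lam p)).toLinearMap
      (by
        intro z hz
        rw [LinearMap.mem_ker]
        show Phi p (lam p z) = 0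
        exact Phi_zero_of_mem p hm4 he (lam_mem_II p ρ hρ hz))) with
    map_lie' := by
      intro x y
      induction x using Quotient.inductionOn' with
      | h x =>
      induction y using Quotient.inductionOn' with
      | h y =>
        have hx : (Quotient.mk'' x : GA p ρ) = LieSubmodule.Quotient.mk (N := RI p ρ) x := rfl
        have hy : (Quotient.mk'' y : GA p ρ) = LieSubmodule.Quotient.mk (N := RI p ρ) y := rfl
        simp only [hx, hy, ← LieSubmodule.Quotient.mk_bracket]
        show Phi p (lam p ⁅x, y⁆) = ⁅Phi p (lam p x), Phi p (lam p y)⁆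
        rw [LieHom.map_lie, Ring.lie_def, map_sub, map_mul, map_mul]
        rfl }

/-- The induced map on the enveloping algebra. -/
noncomputable def zeta (hm4 : 4 ≤ m) (he : Even m)
    (hρ : ∀ k, ρ k =
      (Polynomial.X : Polynomial (ZMod p)) • FreeLieAlgebra.of KK k
      + ⁅FreeLieAlgebra.of KK k, FreeLieAlgebra.of KK (finRotate m k)⁆) :
    UA p ρ →ₐ[KK] Module.End KK (TT p m) :=
  UniversalEnvelopingAlgebra.lift KK (zeta0 p ρ hm4 he hρ)

theorem zeta_phi (hm4 : 4 ≤ m) (he : Even m)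
    (hρ : ∀ k, ρ k =
      (Polynomial.X : Polynomial (ZMod p)) • FreeLieAlgebra.of KK k
      + ⁅FreeLieAlgebra.of KK k, FreeLieAlgebra.of KK (finRotate m k)⁆) (t : TT p m) :
    zeta p ρ hm4 he hρ (piT p ρ t) = Phi p t := by
  have h : (zeta p ρ hm4 he hρ).comp (piT p ρ) = Phi p := by
    apply TT_algHom_ext
    intro j
    show zeta p ρ hm4 he hρ (piT p ρ (xg p j)) = Phi p (xg p j)
    rw [piT_xg, Phi_xg, zeta, UniversalEnvelopingAlgebra.lift_ι_apply]
    show Phi p (lam p (FreeLieAlgebra.of KK j)) = Eop p j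
    rw [lam_of, Phi_xg]
  exact DFunLike.congr_fun h t

theorem ienv_mem_range (z : LL) :
    UniversalEnvelopingAlgebra.ι KK (mkLie p ρ z) ∈ (piT p ρ).range := by
  let ν₀ : LL →ₗ[KK] UA p ρ :=
    (UniversalEnvelopingAlgebra.ι KK).toLinearMap.comp
      ((mkLie p ρ).toLinearMap)
  let Ssub : LieSubalgebra KK LL :=
    { Submodule.comap ν₀ (Subalgebra.toSubmodule (piT p ρ).range) with
      lie_mem' := by
        intro x y hx hy
        show ν₀ ⁅x, y⁆ ∈ Subalgebra.toSubmodule (piT p ρ).range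
        have h : ν₀ ⁅x, y⁆ = ν₀ x * ν₀ y - ν₀ y * ν₀ x := by
          show UniversalEnvelopingAlgebra.ι KK (mkLie p ρ ⁅x, y⁆) = _
          rw [LieHom.map_lie, LieHom.map_lie, Ring.lie_def]
          rfl
        have hx' : ν₀ x ∈ (piT p ρ).range := hx
        have hy' : ν₀ y ∈ (piT p ρ).range := hy
        rw [Subalgebra.mem_toSubmodule, h]
        exact sub_mem (mul_mem hx' hy') (mul_mem hy' hx') }

  have hgen : ∀ j, FreeLieAlgebra.of KK j ∈ Ssub := by
    intro j
    show UniversalEnvelopingAlgebra.ι KK (mkLie p ρ (FreeLieAlgebra.of KK j))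
      ∈ Subalgebra.toSubmodule (piT p ρ).range
    exact (Subalgebra.mem_toSubmodule _).mpr ⟨xg p j, piT_xg p ρ j⟩
  let glift : LL →ₗ⁅KK⁆ Ssub :=
    FreeLieAlgebra.lift _ (fun j => (⟨FreeLieAlgebra.of KK j, hgen j⟩ : Ssub))
  have hincl : Ssub.incl.comp glift = LieHom.id := by
    apply FreeLieAlgebra.hom_ext
    intro j
    show (Ssub.incl (glift (FreeLieAlgebra.of KK j)) : LL) = FreeLieAlgebra.of KK j
    have h2 : glift (FreeLieAlgebra.of KK j) = ⟨FreeLieAlgebra.of KK j, hgen j⟩ :=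
      FreeLieAlgebra.lift_of_apply _ _
    rw [h2]
    rfl
  have hz : z ∈ Ssub := by
    have h1 : Ssub.incl (glift z) = z := DFunLike.congr_fun hincl z
    rw [← h1]
    exact (glift z).2
  exact hz

theorem piT_surjective : Function.Surjective (piT p ρ) := by
  intro u
  obtain ⟨t, rfl⟩ := RingCon.mkₐ_surjective (α := KK)
    (UniversalEnvelopingAlgebra.ringCon KK (GA p ρ)) u
  show UniversalEnvelopingAlgebra.mkAlgHom KK _ t ∈ (piT p ρ).range
  induction t using TensorAlgebra.induction with
  | algebraMap c =>
    rw [AlgHom.commutes]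
    exact Subalgebra.algebraMap_mem _ c
  | ι ξ =>
    obtain ⟨z, rfl⟩ := LieSubmodule.Quotient.surjective_mk' (N := (RI p ρ)) ξ
    have h1 : UniversalEnvelopingAlgebra.mkAlgHom KK (GA p ρ)
        ((TensorAlgebra.ι KK) (LieSubmodule.Quotient.mk' (RI p ρ) z))
        = UniversalEnvelopingAlgebra.ι KK (mkLie p ρ z) := rfl
    rw [h1]
    exact ienv_mem_range p ρ z
  | mul a b ha hb => rw [map_mul]; exact mul_mem ha hb
  | add a b ha hb => rw [map_add]; exact add_mem ha hb

theorem piT_zero_of_mem (hρ : ∀ k, ρ k =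
      (Polynomial.X : Polynomial (ZMod p)) • FreeLieAlgebra.of KK k
      + ⁅FreeLieAlgebra.of KK k, FreeLieAlgebra.of KK (finRotate m k)⁆)
    {t : TT p m} (h : t ∈ II p m) : piT p ρ t = 0 := by
  induction h using Submodule.span_induction with
  | mem t ht =>
    obtain ⟨a, b, k, rfl⟩ := ht
    have h1 : piT p ρ (fel p k) = 0 := by
      rw [← lam_rho p ρ hρ k]
      exact piT_lam_zero p ρ hρ (LieSubmodule.subset_lieSpan (Set.mem_range_self k))
    rw [map_mul, map_mul, h1, mul_zero, zero_mul]
  | zero => rw [map_zero]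
  | add x y _ _ hx hy => rw [map_add, hx, hy, add_zero]
  | smul c x _ hx => rw [map_smul, hx, smul_zero]

theorem theta_inj (hm4 : 4 ≤ m) (he : Even m)
    (hρ : ∀ k, ρ k =
      (Polynomial.X : Polynomial (ZMod p)) • FreeLieAlgebra.of KK k
      + ⁅FreeLieAlgebra.of KK k, FreeLieAlgebra.of KK (finRotate m k)⁆)
    {u : UA p ρ} (h : zeta p ρ hm4 he hρ u 1 = 0) : u = 0 := by
  obtain ⟨t, rfl⟩ := piT_surjective p ρ u
  rw [zeta_phi] at h
  exact piT_zero_of_mem p ρ hρ (mem_of_nu_zero p h)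

end Bridge


section Fox

variable {m : ℕ} (p : ℕ)

local notation "KK" => Polynomial (ZMod p)
local notation "LL" => FreeLieAlgebra (Polynomial (ZMod p)) (Fin m)

/-- Right Fox derivative, auxiliary word function. -/
noncomputable def dwordAux (i : Fin m) : List (Fin m) → TT p m
  | [] => 0
  | a :: v => if a = i then single (ofList v.reverse) 1 else 0

/-- Right Fox derivative on words. -/
noncomputable def dword (i : Fin m) (l : List (Fin m)) : TT p m := dwordAux p i l.reverse

theorem dword_nil (i : Fin m) : dword p i [] = 0 := rfl

theorem dword_concat (i a : Fin m) (l : List (Fin m)) :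
    dword p i (l ++ [a]) = if a = i then single (ofList l) 1 else 0 := by
  rw [dword, List.reverse_append]
  show dwordAux p i (a :: l.reverse) = _
  rw [dwordAux, List.reverse_reverse]

/-- The `i`-th right Fox derivative. -/
noncomputable def Dfox (i : Fin m) : TT p m →ₗ[KK] TT p m :=
  Finsupp.linearCombination _ (fun w : FreeMonoid (Fin m) => dword p i w.toList) ∘ₗ
    (MonoidAlgebra.coeffLinearEquiv _).toLinearMap

theorem TTzero_apply (w : FreeMonoid (Fin m)) : (0 : TT p m).coeff w = 0 := rfl

theorem TTadd_apply (a b : TT p m) (w : FreeMonoid (Fin m)) : (a + b).coeff w = a.coeff w + b.coeff w := rfl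

theorem TTsub_apply (a b : TT p m) (w : FreeMonoid (Fin m)) : (a - b).coeff w = a.coeff w - b.coeff w := rfl

theorem Dfox_single (i : Fin m) (w : FreeMonoid (Fin m)) (c : Polynomial (ZMod p)) :
    Dfox p i (single w c) = c • dword p i w.toList :=
  Finsupp.linearCombination_single _ _ _

theorem Dfox_one (i : Fin m) : Dfox p i 1 = 0 := by
  have h : (1 : TT p m) = single 1 1 := rfl
  rw [h, Dfox_single]
  show (1 : KK) • dword p i [] = 0
  rw [dword_nil, smul_zero]

theorem Dfox_mul_xg (i : Fin m) (t : TT p m) (a : Fin m) :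
    Dfox p i (t * xg p a) = if a = i then t else 0 := by
  induction t using MonoidAlgebra.induction_linear with
  | zero => rw [zero_mul, map_zero]; split <;> rfl
  | add f g hf hg =>
    rw [add_mul, map_add, hf, hg]
    split <;> simp
  | single w c =>
    rw [single_mul_xg, Dfox_single]
    have h1 : (w * of a).toList = w.toList ++ [a] := rfl
    rw [h1, dword_concat]
    split
    · rw [← single_eq_smul]; rfl
    · rw [smul_zero]

theorem Dfox_xg (i a : Fin m) : Dfox p i (xg p a) = if a = i then 1 else 0 := by
  have := Dfox_mul_xg p i 1 a
  rwa [one_mul] at this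

theorem coeff_one_mul (a b : TT p m) :
    (a * b).coeff 1 = a.coeff 1 * b.coeff 1 := by
  classical
  induction a using MonoidAlgebra.induction_linear with
  | zero => rw [zero_mul]; simp
  | add f g hf hg =>
    rw [add_mul, TTadd_apply, TTadd_apply, hf, hg, add_mul]
  | single u c =>
    induction b using MonoidAlgebra.induction_linear with
    | zero => rw [mul_zero]; simp
    | add f g hf hg =>
      rw [mul_add, TTadd_apply, TTadd_apply, hf, hg, mul_add]
    | single v d =>
      rw [single_mul_single]
      have hiff : u * v = (1 : FreeMonoid (Fin m)) ↔ u = 1 ∧ v = 1 := by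
        constructor
        · intro h
          have h2 : u.toList ++ v.toList = [] := congrArg FreeMonoid.toList h
          rcases List.append_eq_nil_iff.mp h2 with ⟨h3, h4⟩
          exact ⟨FreeMonoid.toList.injective h3, FreeMonoid.toList.injective h4⟩
        · rintro ⟨rfl, rfl⟩
          rw [one_mul]
      rw [MonoidAlgebra.coeff_single, MonoidAlgebra.coeff_single, MonoidAlgebra.coeff_single,
        Finsupp.single_apply, Finsupp.single_apply, Finsupp.single_apply]
      by_cases h1 : u = 1 <;> by_cases h2 : v = 1 <;>
        simp [h1, h2, hiff, mul_comm]

theorem lam_coeff_one (z : LL) : (lam p z).coeff 1 = 0 := by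
  classical
  let lieEps : TT p m →ₗ⁅KK⁆ KK :=
    { (Finsupp.lapply (1 : FreeMonoid (Fin m))).comp
        (MonoidAlgebra.coeffLinearEquiv KK).toLinearMap with
      map_lie' := by
        intro x y
        show (⁅x, y⁆ : TT p m).coeff 1 = ⁅x.coeff 1, y.coeff 1⁆
        rw [Ring.lie_def, Ring.lie_def, TTsub_apply, coeff_one_mul, coeff_one_mul,
          mul_comm, sub_self] }
  have h : lieEps.comp (lam p) = 0 := by
    apply FreeLieAlgebra.hom_ext
    intro j
    show (lam p (FreeLieAlgebra.of KK j)).coeff 1 = (0 : LL →ₗ⁅KK⁆ KK) (FreeLieAlgebra.of KK j)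
    rw [lam_of, xg]
    have h2 : of j ≠ (1 : FreeMonoid (Fin m)) := by
      intro h3
      exact List.cons_ne_nil j [] (congrArg FreeMonoid.toList h3)
    show (Finsupp.single (of j) (1:KK)) 1 = _
    rw [Finsupp.single_apply, if_neg h2]
    rfl
  exact DFunLike.congr_fun h z

theorem Dfox_mul_word (i : Fin m) (t : TT p m) (l : List (Fin m)) :
    Dfox p i (t * single (ofList l) 1)
      = t * Dfox p i (single (ofList l) 1)
        + ((single (ofList l) 1 : TT p m).coeff 1) • Dfox p i t := by
  classical
  induction l using List.reverseRecOn with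
  | nil =>
    have h1 : (single (ofList ([] : List (Fin m))) 1 : TT p m) = 1 := rfl
    rw [h1, mul_one, Dfox_one, mul_zero, zero_add]
    have h2 : ((1 : TT p m)).coeff 1 = 1 := by
      show (Finsupp.single (1 : FreeMonoid (Fin m)) (1:KK)) 1 = 1
      rw [Finsupp.single_apply, if_pos rfl]
    rw [h2, one_smul]
  | append_singleton l a _ =>
    have h1 : (single (ofList (l ++ [a])) 1 : TT p m) = single (ofList l) 1 * xg p a :=
      (single_mul_xg p a (ofList l) 1).symm
    have h2 : ((single (ofList (l ++ [a])) 1 : TT p m)).coeff 1 = 0 := by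
      show (Finsupp.single (ofList (l ++ [a])) (1:KK)) 1 = 0
      rw [Finsupp.single_apply, if_neg]
      intro h3
      have h4 : l ++ [a] = [] := congrArg FreeMonoid.toList h3
      simp at h4
    rw [h2, zero_smul, add_zero, h1, ← mul_assoc, Dfox_mul_xg, Dfox_mul_xg]
    split
    · rfl
    · rw [mul_zero]

theorem Dfox_mul (i : Fin m) (t u : TT p m) :
    Dfox p i (t * u) = t * Dfox p i u + (u.coeff 1) • Dfox p i t := by
  induction u using MonoidAlgebra.induction_linear with
  | zero =>
    rw [mul_zero, map_zero, mul_zero, TTzero_apply, zero_smul, add_zero]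
  | add f g hf hg =>
    rw [mul_add, map_add, hf, hg, map_add, mul_add, TTadd_apply, add_smul]
    abel
  | single w c =>
    have base : Dfox p i (t * single w 1)
        = t * Dfox p i (single w 1) + ((single w 1 : TT p m).coeff 1) • Dfox p i t :=
      Dfox_mul_word p i t w.toList
    rw [single_eq_smul, mul_smul_comm, map_smul, map_smul, MonoidAlgebra.coeff_smul_apply,
      smul_eq_mul, base, smul_add, mul_smul, mul_smul_comm]

theorem Dfox_fel (he : Even m) (hm4 : 4 ≤ m) (i k : Fin m) :
    Dfox p i (fel p k)
      = (if k = i then ((Polynomial.X : KK) • 1 - xg p (finRotate m k)) else 0)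
        + (if finRotate m k = i then xg p k else 0) := by
  rw [fel, map_sub, map_add, map_smul, Dfox_xg, Dfox_mul_xg, Dfox_mul_xg]
  split_ifs with h1 h2 h2
  · exact absurd (h1 ▸ h2 : finRotate m k = k) (rot_ne (by omega) k)
  · abel
  · rw [smul_zero]; abel
  · rw [smul_zero]; abel

end Fox


theorem last_eq_of_concat_eq {α : Type*} {l1 l2 : List α} {a b : α}
    (h : l1 ++ [a] = l2 ++ [b]) : a = b := by
  have h2 := congrArg List.reverse h
  rw [List.reverse_append, List.reverse_append] at h2
  simp at h2
  exact h2.1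

section Chi

variable {m : ℕ} (p : ℕ)
variable (ρ : Fin m → FreeLieAlgebra (Polynomial (ZMod p)) (Fin m))

local notation "KK" => Polynomial (ZMod p)
local notation "LL" => FreeLieAlgebra (Polynomial (ZMod p)) (Fin m)

/-- Fox derivative vector of a Lie element, pushed to the enveloping algebra. -/
noncomputable def chival (z : LL) : Fin m → UA p ρ :=
  fun i => piT p ρ (Dfox p i (lam p z))

theorem chival_lie (x z : LL) (hz : piT p ρ (lam p z) = 0) :
    chival p ρ ⁅x, z⁆ = fun i => piT p ρ (lam p x) * chival p ρ z i := by
  funext i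
  rw [chival, LieHom.map_lie, Ring.lie_def, map_sub, Dfox_mul, Dfox_mul, lam_coeff_one,
    lam_coeff_one, zero_smul, zero_smul, add_zero, add_zero, map_sub, map_mul, map_mul,
    hz, zero_mul, sub_zero]
  rfl

theorem chival_add (a b : LL) : chival p ρ (a + b) = chival p ρ a + chival p ρ b := by
  funext i
  show piT p ρ (Dfox p i (lam p (a + b))) = _
  rw [map_add, map_add, map_add]
  rfl

theorem chival_smul (c : KK) (a : LL) : chival p ρ (c • a) = c • chival p ρ a := by
  funext i
  show piT p ρ (Dfox p i (lam p (c • a))) = _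
  rw [map_smul, map_smul, map_smul]
  rfl

/-- The Fox derivative map, as a linear map on the relator ideal. -/
noncomputable def chilin : (RI p ρ) →ₗ[KK] (Fin m → UA p ρ) where
  toFun r := chival p ρ r.1
  map_add' a b := by
    show chival p ρ ((a + b : RI p ρ) : LL) = chival p ρ (a : LL) + chival p ρ (b : LL)
    have h : ((a + b : RI p ρ) : LL) = (a : LL) + (b : LL) := rfl
    rw [h, chival_add]
  map_smul' c a := by
    show chival p ρ ((c • a : RI p ρ) : LL) = c • chival p ρ (a : LL)
    have h : ((c • a : RI p ρ) : LL) = c • (a : LL) := rfl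
    rw [h, chival_smul]

theorem chilin_lie (hρ : ∀ k, ρ k =
      (Polynomial.X : Polynomial (ZMod p)) • FreeLieAlgebra.of KK k
      + ⁅FreeLieAlgebra.of KK k, FreeLieAlgebra.of KK (finRotate m k)⁆)
    (x : LL) (r : RI p ρ) :
    chilin p ρ ⁅x, r⁆ = fun i => piT p ρ (lam p x) * chilin p ρ r i := by
  have h : ((⁅x, r⁆ : RI p ρ) : LL) = ⁅x, (r : LL)⁆ := rfl
  show chival p ρ ((⁅x, r⁆ : RI p ρ) : LL) = _
  rw [h, chival_lie p ρ x (r : LL) (piT_lam_zero p ρ hρ r.2)]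
  rfl

theorem chival_rho (he : Even m) (hm4 : 4 ≤ m)
    (hρ : ∀ k, ρ k =
      (Polynomial.X : Polynomial (ZMod p)) • FreeLieAlgebra.of KK k
      + ⁅FreeLieAlgebra.of KK k, FreeLieAlgebra.of KK (finRotate m k)⁆) (k : Fin m) :
    chival p ρ (ρ k) = fun i =>
      (if k = i then ((Polynomial.X : KK) • 1 - piT p ρ (xg p (finRotate m k))) else 0)
        + (if finRotate m k = i then piT p ρ (xg p k) else 0) := by
  funext i
  rw [chival, lam_rho p ρ hρ, Dfox_fel p he hm4, map_add, apply_ite (piT p ρ), map_zero,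
    apply_ite (piT p ρ), map_zero, map_sub, map_smul, map_one]

end Chi


section Extra

variable {m : ℕ} (p : ℕ)

theorem TT_congr_fun {a b : TT p m} (h : a = b) (w : FreeMonoid (Fin m)) : a.coeff w = b.coeff w := by
  rw [h]

theorem Eop_one (j : Fin m) : Eop p j 1 = xg p j := by
  have h : (1 : TT p m) = single 1 1 := rfl
  rw [h, Eop_single]
  show (1 : Polynomial (ZMod p)) • act p j [] = xg p j
  rw [act_nil, one_smul]

end Extra

section Ab

variable {m : ℕ} (p : ℕ)
variable (ρ : Fin m → FreeLieAlgebra (Polynomial (ZMod p)) (Fin m))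

local notation "KK" => Polynomial (ZMod p)
local notation "LL" => FreeLieAlgebra (Polynomial (ZMod p)) (Fin m)

/-- The abelianized relator module. -/
noncomputable abbrev MAq := LieIdealAb (Polynomial (ZMod p))
  (FreeLieAlgebra (Polynomial (ZMod p)) (Fin m)) (RI p ρ)

/-- The derived submodule (abbreviation). -/
noncomputable abbrev DSub := derivedLieSubmodule (Polynomial (ZMod p))
  (FreeLieAlgebra (Polynomial (ZMod p)) (Fin m)) (RI p ρ)

/-- The quotient map onto the abelianization, as a linear map. -/
noncomputable def mkM : (RI p ρ) →ₗ[KK] MAq p ρ := (DSub p ρ).toSubmodule.mkQ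

theorem mkM_eq (r : RI p ρ) :
    mkM p ρ r = LieSubmodule.Quotient.mk (N := DSub p ρ) r := rfl

theorem ua_smul_def (u : UA p ρ) (v : MAq p ρ) :
    u • v = (UniversalEnvelopingAlgebra.lift KK (abelianizationAction KK LL (RI p ρ)) u) v :=
  rfl

theorem iota_smul_mk (z : LL) (r : RI p ρ) :
    (UniversalEnvelopingAlgebra.ι KK (mkLie p ρ z)) •
        (LieSubmodule.Quotient.mk (N := DSub p ρ) r : MAq p ρ)
      = LieSubmodule.Quotient.mk (N := DSub p ρ) ⁅z, r⁆ := by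
  rw [ua_smul_def, UniversalEnvelopingAlgebra.lift_ι_apply]
  have h1 : abelianizationAction KK LL (RI p ρ) (mkLie p ρ z)
      = LieModule.toEnd KK LL (LieIdealAb KK LL (RI p ρ)) z := by
    show Submodule.liftQ _ _ _ (Submodule.Quotient.mk z) = _
    rfl
  rw [h1]
  rfl

theorem algebraMap_smul_mk (c : KK) (v : MAq p ρ) :
    (algebraMap KK (UA p ρ) c) • v = c • v := by
  rw [ua_smul_def, AlgHom.commutes, Module.algebraMap_end_apply]

/-- The Fox derivative map on the abelianization. -/
noncomputable def chibar (hρ : ∀ k, ρ k =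
      (Polynomial.X : Polynomial (ZMod p)) • FreeLieAlgebra.of KK k
      + ⁅FreeLieAlgebra.of KK k, FreeLieAlgebra.of KK (finRotate m k)⁆) :
    MAq p ρ →ₗ[KK] (Fin m → UA p ρ) :=
  Submodule.liftQ (DSub p ρ).toSubmodule (chilin p ρ) (by
    intro d hd
    rw [LinearMap.mem_ker]
    have hd' : d ∈ DSub p ρ := hd
    let NN2 : LieSubmodule KK LL (RI p ρ) :=
      { LinearMap.ker (chilin p ρ) with
        lie_mem := by
          intro x d hd
          have hd2 : chilin p ρ d = 0 := hd
          show chilin p ρ ⁅x, d⁆ = 0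
          rw [chilin_lie p ρ hρ]
          funext i
          rw [hd2]
          show piT p ρ (lam p x) * 0 = 0
          rw [mul_zero] }
    have hle : DSub p ρ ≤ NN2 := LieSubmodule.lieSpan_le.mpr (by
      rintro z ⟨x, y, hz⟩
      show chilin p ρ z = 0
      show chival p ρ (z : LL) = 0
      rw [hz, chival_lie p ρ _ _ (piT_lam_zero p ρ hρ y.2),
        piT_lam_zero p ρ hρ x.2]
      funext i
      rw [zero_mul]
      rfl)
    exact hle hd')

theorem chibar_mk (hρ : ∀ k, ρ k =
      (Polynomial.X : Polynomial (ZMod p)) • FreeLieAlgebra.of KK k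
      + ⁅FreeLieAlgebra.of KK k, FreeLieAlgebra.of KK (finRotate m k)⁆) (r : RI p ρ) :
    chibar p ρ hρ (LieSubmodule.Quotient.mk (N := DSub p ρ) r) = chival p ρ r.1 :=
  rfl

theorem chibar_ua_smul (hρ : ∀ k, ρ k =
      (Polynomial.X : Polynomial (ZMod p)) • FreeLieAlgebra.of KK k
      + ⁅FreeLieAlgebra.of KK k, FreeLieAlgebra.of KK (finRotate m k)⁆)
    (u : UA p ρ) (w : MAq p ρ) :
    chibar p ρ hρ (u • w) = u • chibar p ρ hρ w := by
  let SS : Subalgebra KK (UA p ρ) :=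
    { carrier := {u | ∀ w, chibar p ρ hρ (u • w) = u • chibar p ρ hρ w}
      mul_mem' := by
        intro a b ha hb w
        rw [mul_smul, ha, hb, smul_smul]
      one_mem' := by intro w; rw [one_smul, one_smul]
      add_mem' := by intro a b ha hb w; rw [add_smul, map_add, ha, hb, add_smul]
      zero_mem' := by intro w; rw [zero_smul, map_zero, zero_smul]
      algebraMap_mem' := by
        intro c w
        rw [algebraMap_smul_mk, map_smul, algebraMap_smul] }
  have hy : ∀ z : LL, UniversalEnvelopingAlgebra.ι KK (mkLie p ρ z) ∈ SS := by
    intro z w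
    induction w using Quotient.inductionOn' with
    | h r =>
      have hw : (Quotient.mk'' r : MAq p ρ)
          = LieSubmodule.Quotient.mk (N := DSub p ρ) r := rfl
      rw [hw, iota_smul_mk, chibar_mk, chibar_mk]
      have h2 := chilin_lie p ρ hρ z r
      rw [show chival p ρ ((⁅z, r⁆ : RI p ρ) : LL) = chilin p ρ ⁅z, r⁆ from rfl, h2]
      funext i
      rw [Pi.smul_apply, smul_eq_mul, piT_lam]
      rfl
  have hword : ∀ l : List (Fin m), piT p ρ (single (ofList l) 1) ∈ SS := by
    intro l
    induction l with
    | nil =>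
      have h1 : (single (ofList ([] : List (Fin m))) 1 : TT p m) = 1 := rfl
      rw [h1, map_one]
      exact one_mem SS
    | cons a l ih =>
      have h1 : (single (ofList (a :: l)) 1 : TT p m) = xg p a * single (ofList l) 1 :=
        (xg_mul_single p a (ofList l) 1).symm
      rw [h1, map_mul]
      refine mul_mem ?_ ih
      rw [piT_xg]
      exact hy _
  have hSS : ∀ t : TT p m, piT p ρ t ∈ SS := by
    intro t
    induction t using MonoidAlgebra.induction_linear with
    | zero => rw [map_zero]; exact zero_mem SS
    | add f g hf hg => rw [map_add]; exact add_mem hf hg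
    | single w c =>
      rw [single_eq_smul, map_smul, Algebra.smul_def]
      exact mul_mem (SS.algebraMap_mem c) (hword w.toList)
  obtain ⟨t, rfl⟩ := piT_surjective p ρ u
  exact hSS t w

end Ab

end Circuit

set_option maxHeartbeats 2000000 in
open Circuit MonoidAlgebra FreeMonoid in
/-- Let `p` be an odd prime, `R = 𝔽_p[π]`, and `m` even with `m ≥ 4`.  In the free Lie
algebra over `R` on `ξ₁,…,ξ_m`, the sequence
`ρ₁ = π·ξ₁ + [ξ₁,ξ₂], ρ₂ = π·ξ₂ + [ξ₂,ξ₃], …, ρ_{m−1} = π·ξ_{m−1} + [ξ_{m−1},ξ_m],`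
`ρ_m = π·ξ_m + [ξ_m,ξ₁]` (the cyclic successor `i ↦ i + 1` being given by `finRotate m`)
is strongly free over `R`.  (These are the initial forms of the pro-`p` relators
`x₁^p[x₁,x₂], …, x_m^p[x_m,x₁]`.) -/
theorem circuit_with_powers_strongly_free (p : ℕ) (hp : p.Prime) (hodd : Odd p)
    (m : ℕ) (hm : 4 ≤ m) (hmeven : Even m)
    (ρ : Fin m → FreeLieAlgebra (Polynomial (ZMod p)) (Fin m))
    (hρ : ∀ k, ρ k =
      (Polynomial.X : Polynomial (ZMod p)) • FreeLieAlgebra.of (Polynomial (ZMod p)) k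
      + ⁅FreeLieAlgebra.of (Polynomial (ZMod p)) k,
          FreeLieAlgebra.of (Polynomial (ZMod p)) (finRotate m k)⁆) :
    IsStronglyFree (Polynomial (ZMod p)) (FreeLieAlgebra (Polynomial (ZMod p)) (Fin m)) ρ := by
  classical
  haveI : Fact p.Prime := ⟨hp⟩
  constructor
  · -- torsion freeness
    rw [_root_.eq_bot_iff]
    rintro u hu
    rw [Submodule.mem_bot]
    obtain ⟨c, hc⟩ := (Submodule.mem_torsion_iff u).mp hu
    have hc' : (c : Polynomial (ZMod p)) • u = 0 := hc
    apply theta_inj p ρ hm hmeven hρ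
    have h1 : zeta p ρ hm hmeven hρ ((c : Polynomial (ZMod p)) • u) 1 = 0 := by
      rw [hc', map_zero, LinearMap.zero_apply]
    rw [map_smul, LinearMap.smul_apply] at h1
    have hcne : (c : Polynomial (ZMod p)) ≠ 0 := nonZeroDivisors.ne_zero c.2
    apply MonoidAlgebra.ext
    apply Finsupp.ext
    intro w
    have h2 := TT_congr_fun p h1 w
    rw [MonoidAlgebra.coeff_smul_apply, smul_eq_mul, TTzero_apply] at h2
    have h3 := mul_eq_zero.mp h2
    rw [TTzero_apply]
    tauto
  · -- the basis
    set v : Fin m → MAq p ρ := fun k =>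
      LieSubmodule.Quotient.mk (N := DSub p ρ)
        (⟨ρ k, LieSubmodule.subset_lieSpan (Set.mem_range_self k)⟩ : RI p ρ) with hvdef
    have hgfun : ∀ k, chibar p ρ hρ (v k) = fun i =>
        (if k = i then ((Polynomial.X : Polynomial (ZMod p)) • 1
            - piT p ρ (xg p (finRotate m k))) else 0)
          + (if finRotate m k = i then piT p ρ (xg p k) else 0) :=
      fun k => (chibar_mk p ρ hρ _).trans (chival_rho p ρ hmeven hm hρ k)
    have hindep : LinearIndependent (UA p ρ) v := by
      rw [Fintype.linearIndependent_iff]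
      intro c hc
      have himg : ∀ i : Fin m, ∑ k, c k * (chibar p ρ hρ (v k)) i = 0 := by
        intro i
        have h1 := congrArg (chibar p ρ hρ) hc
        rw [map_sum, map_zero] at h1
        have h2 := congrFun h1 i
        rw [Finset.sum_apply, Pi.zero_apply] at h2
        rw [← h2]
        apply Finset.sum_congr rfl
        intro k _
        rw [chibar_ua_smul p ρ hρ, Pi.smul_apply, smul_eq_mul]
      choose t ht using fun j => piT_surjective p ρ (c j)
      have hczero : ∀ j : Fin m, Phi p (t j) 1 = 0 → c j = 0 := by
        intro j hN
        rw [← ht j]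
        exact piT_zero_of_mem p ρ hρ (mem_of_nu_zero p hN)
      have key : ∀ k0 : Fin m, (k0 : ℕ) % 2 = 1 → c k0 = 0 ∧ c (finRotate m k0) = 0 := by
        intro k0 hk0
        have hσσ : ((finRotate m (finRotate m k0) : Fin m) : ℕ) % 2 = 1 := by
          have e1 := rot_parity (show 2 ≤ m by omega) hmeven k0
          have e2 := rot_parity (show 2 ≤ m by omega) hmeven (finRotate m k0)
          omega
        have hne : finRotate m (finRotate m k0) ≠ k0 := rot_rot_ne hm k0
        have hEq := himg (finRotate m k0)
        simp only [hgfun] at hEq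
        rw [Finset.sum_congr rfl (fun k _ => by
          rw [mul_add, mul_ite, mul_zero, mul_ite, mul_zero,
            if_congr ((finRotate m).injective.eq_iff (a := k) (b := k0)) rfl rfl]),
          Finset.sum_add_distrib, Finset.sum_ite_eq' Finset.univ (finRotate m k0),
          Finset.sum_ite_eq' Finset.univ k0, if_pos (Finset.mem_univ _),
          if_pos (Finset.mem_univ _)] at hEq
        have hEnd := congrArg (zeta p ρ hm hmeven hρ) hEq
        rw [← ht (finRotate m k0), ← ht k0] at hEnd
        rw [map_add, map_mul, map_mul, map_zero, map_sub, map_smul, map_one,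
          zeta_phi, zeta_phi, zeta_phi, zeta_phi, Phi_xg, Phi_xg] at hEnd
        have hTT := congrFun (congrArg DFunLike.coe hEnd) (1 : TT p m)
        rw [LinearMap.add_apply, Module.End.mul_apply, Module.End.mul_apply,
          LinearMap.sub_apply, LinearMap.smul_apply, Module.End.one_apply,
          LinearMap.zero_apply, Eop_one, Eop_one, map_sub, map_smul] at hTT
        have hr1 := Phi_rightmul p (show 2 ≤ m by omega) hmeven hσσ (t (finRotate m k0)) 1
        have hr2 := Phi_rightmul p (show 2 ≤ m by omega) hmeven hk0 (t k0) 1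
        rw [one_mul] at hr1 hr2
        rw [hr1, hr2] at hTT
        have hNσ : Phi p (t (finRotate m k0)) 1 = 0 := by
          apply descent p (j := finRotate m (finRotate m k0))
          intro w
          have h := TT_congr_fun p hTT (w * of (finRotate m (finRotate m k0)))
          rw [TTadd_apply, TTsub_apply, MonoidAlgebra.coeff_smul_apply, smul_eq_mul,
            coeff_mul_xg, coeff_mul_xg_ne p (Phi p (t k0) 1) (j := k0)
              (w := w * FreeMonoid.of (finRotate m (finRotate m k0))) (fun d hd => hne
              (last_eq_of_concat_eq (congrArg FreeMonoid.toList hd))),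
            add_zero, TTzero_apply] at h
          exact (sub_eq_zero.mp h).symm
        have hNk : Phi p (t k0) 1 = 0 := by
          rw [hNσ, smul_zero, zero_mul, sub_zero, zero_add] at hTT
          apply MonoidAlgebra.ext
          apply Finsupp.ext
          intro w
          have h := TT_congr_fun p hTT (w * of k0)
          rw [coeff_mul_xg, TTzero_apply] at h
          rw [TTzero_apply]
          exact h
        exact ⟨hczero k0 hNk, hczero (finRotate m k0) hNσ⟩
      intro i
      rcases Nat.even_or_odd (i : ℕ) with hi | hi
      · have hsk : finRotate m ((finRotate m).symm i) = i := Equiv.apply_symm_apply _ _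
        have hk0odd : (((finRotate m).symm i : Fin m) : ℕ) % 2 = 1 := by
          have e := rot_parity (show 2 ≤ m by omega) hmeven ((finRotate m).symm i)
          rw [hsk] at e
          have h0 : (i : ℕ) % 2 = 0 := Nat.even_iff.mp hi
          omega
        have h5 := (key _ hk0odd).2
        rwa [hsk] at h5
      · exact (key i (Nat.odd_iff.mp hi)).1
    have hspan : ⊤ ≤ Submodule.span (UA p ρ) (Set.range v) := by
      rintro w -
      induction w using Quotient.inductionOn' with
      | h r =>
        let CC : LieSubmodule (Polynomial (ZMod p))
            (FreeLieAlgebra (Polynomial (ZMod p)) (Fin m))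
            (FreeLieAlgebra (Polynomial (ZMod p)) (Fin m)) :=
          { carrier := {z | ∃ h : z ∈ RI p ρ,
              mkM p ρ (⟨z, h⟩ : RI p ρ) ∈ Submodule.span (UA p ρ) (Set.range v)}
            add_mem' := by
              rintro a b ⟨ha, hma⟩ ⟨hb, hmb⟩
              refine ⟨add_mem ha hb, ?_⟩
              have he : (⟨a + b, add_mem ha hb⟩ : RI p ρ) = ⟨a, ha⟩ + ⟨b, hb⟩ := rfl
              rw [he, map_add]
              exact add_mem hma hmb
            zero_mem' := by
              refine ⟨zero_mem _, ?_⟩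
              have he : (⟨0, zero_mem _⟩ : RI p ρ) = 0 := rfl
              rw [he, map_zero]
              exact zero_mem _
            smul_mem' := by
              rintro cc z ⟨h, hm2⟩
              refine ⟨Submodule.smul_mem _ cc h, ?_⟩
              have he : (⟨cc • z, Submodule.smul_mem _ cc h⟩ : RI p ρ)
                  = cc • (⟨z, h⟩ : RI p ρ) := rfl
              rw [he, map_smul, ← algebraMap_smul_mk]
              exact Submodule.smul_mem _ _ hm2
            lie_mem := by
              rintro x z ⟨h, hm2⟩
              refine ⟨(RI p ρ).lie_mem h, ?_⟩
              have he : (⟨⁅x, z⁆, (RI p ρ).lie_mem h⟩ : RI p ρ)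
                  = ⁅x, (⟨z, h⟩ : RI p ρ)⁆ := rfl
              rw [he, mkM_eq, ← iota_smul_mk]
              exact Submodule.smul_mem _ _ hm2 }
        have hle : RI p ρ ≤ CC := LieSubmodule.lieSpan_le.mpr (by
          rintro _ ⟨k, rfl⟩
          exact ⟨LieSubmodule.subset_lieSpan (Set.mem_range_self k),
            Submodule.subset_span ⟨k, rfl⟩⟩)
        obtain ⟨h', hm2⟩ := hle r.2
        have he : (⟨(r : FreeLieAlgebra (Polynomial (ZMod p)) (Fin m)), h'⟩ : RI p ρ) = r :=
          rfl
        rw [he] at hm2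
        exact hm2
    exact ⟨Module.Basis.mk hindep hspan, fun i => Module.Basis.mk_apply _ _ i⟩
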